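/- Let n ≥ 2, let E be a length function on ℂⁿ, and let g : ℂ → ℂ^{n−1} be an entire map such that the function z ↦ E((z, g(z)), (1, g'(z))) is unbounded on ℂ. Put f(z) = (z, g(z)) : ℂ → ℂⁿ. Then there do NOT exist a sequence of positive integers m_k, points p_k ∈ Δ contained in a compact subset of the unit disc Δ, and ρ_k > 0 with ρ_k → 0⁺, such that φ_k(ξ) := f(m_k p_k + m_k ρ_k ξ) converges uniformly on every compact subset of ℂ to a non-constant holomorphic map φ : ℂ → ℂⁿ with sup_{ξ∈ℂ} E(φ(ξ), φ'(ξ)) < ∞. -/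

import Mathlib

open Filter Topology Metric

/-- **Key construction in the proof that `ℂⁿ` is not of `E`-limit type.**
Let `n = m + 1 ≥ 2`, let `E` be a length function on `ℂⁿ`, and let `g : ℂ → ℂ^m` be entire
with `z ↦ E((z, g z), (1, g' z))` unbounded on `ℂ`. Put `f z = (z, g z)`.
Then there is no rescaling `φ_k (ξ) = f (m_k p_k + m_k ρ_k ξ)` (with `m_k` positive integers,
`p_k` in a compact subset of the unit disc, `ρ_k → 0⁺`) converging uniformly on compact
subsets of `ℂ` to a non-constant holomorphic curve with bounded `E`-derivative. -/
theorem stmt2 (m : ℕ) (hm : 1 ≤ m)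
    (E : (Fin (m + 1) → ℂ) → (Fin (m + 1) → ℂ) → ℝ)
    (hEcont : Continuous fun p : (Fin (m + 1) → ℂ) × (Fin (m + 1) → ℂ) => E p.1 p.2)
    (hEnonneg : ∀ z v, 0 ≤ E z v)
    (hEzero : ∀ z v, E z v = 0 ↔ v = 0)
    (hEhom : ∀ (z : Fin (m + 1) → ℂ) (a : ℂ) (v : Fin (m + 1) → ℂ),
      E z (a • v) = ‖a‖ * E z v)
    (g : ℂ → (Fin m → ℂ)) (hg : Differentiable ℂ g)
    (hunbdd : ¬ ∃ C : ℝ, ∀ z : ℂ,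
      E (Fin.cons z (g z)) (Fin.cons 1 (deriv g z)) ≤ C) :
    ¬ ∃ (mk : ℕ → ℕ) (p : ℕ → ℂ) (ρ : ℕ → ℝ) (φ : ℂ → (Fin (m + 1) → ℂ)),
        (∀ k, 0 < mk k) ∧
        -- the `p k` lie in a compact subset of the unit disc
        (∃ r : ℝ, r < 1 ∧ ∀ k, ‖p k‖ ≤ r) ∧
        (∀ k, 0 < ρ k) ∧ Tendsto ρ atTop (𝓝 0) ∧
        Differentiable ℂ φ ∧
        (¬ ∃ c, ∀ ξ : ℂ, φ ξ = c) ∧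
        (∃ C : ℝ, ∀ ξ : ℂ, E (φ ξ) (deriv φ ξ) ≤ C) ∧
        (∀ K : Set ℂ, IsCompact K →
          TendstoUniformlyOn
            (fun k ξ => Fin.cons ((mk k : ℂ) * p k + (mk k : ℂ) * (ρ k : ℂ) * ξ)
              (g ((mk k : ℂ) * p k + (mk k : ℂ) * (ρ k : ℂ) * ξ)))
            φ atTop K) := by
  rintro ⟨mk, p, ρ, φ, hmk, hpr, hρpos, hρ0, hφdiff, hφnc, ⟨C, hC⟩, hconv⟩
  set c : ℕ → ℂ := fun k => (mk k : ℂ) * p k with hc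
  set d : ℕ → ℂ := fun k => (mk k : ℂ) * (ρ k : ℂ) with hd
  -- pointwise convergence of the rescalings
  have hpt : ∀ ξ : ℂ, Tendsto
      (fun k => (Fin.cons (c k + d k * ξ) (g (c k + d k * ξ)) : Fin (m + 1) → ℂ))
      atTop (𝓝 (φ ξ)) := fun ξ =>
    (hconv {ξ} isCompact_singleton).tendsto_at (Set.mem_singleton ξ)
  -- first coordinate converges
  have h0 : ∀ ξ : ℂ, Tendsto (fun k => c k + d k * ξ) atTop (𝓝 (φ ξ 0)) := by
    intro ξ
    have := tendsto_pi_nhds.1 (hpt ξ) 0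
    simpa using this
  set a : ℂ := φ 0 0 with ha
  set b : ℂ := φ 1 0 - φ 0 0 with hb
  have hca : Tendsto c atTop (𝓝 a) := by
    have := h0 0; simpa using this
  have hdb : Tendsto d atTop (𝓝 b) := by
    have h1 := h0 1
    have := h1.sub hca
    simpa [hb] using this
  -- the limit curve is `f (a + b ξ)`
  have hFcont : Continuous fun z : ℂ => (Fin.cons z (g z) : Fin (m + 1) → ℂ) := by
    apply continuous_pi
    intro i
    refine Fin.cases ?_ ?_ i
    · simpa using continuous_id'
    · intro j
      simp only [Fin.cons_succ]
      exact (continuous_apply j).comp hg.continuous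
  have hφ : ∀ ξ : ℂ, φ ξ = Fin.cons (a + b * ξ) (g (a + b * ξ)) := by
    intro ξ
    have harg : Tendsto (fun k => c k + d k * ξ) atTop (𝓝 (a + b * ξ)) :=
      hca.add (hdb.mul_const ξ)
    have h2 : Tendsto
        (fun k => (Fin.cons (c k + d k * ξ) (g (c k + d k * ξ)) : Fin (m + 1) → ℂ))
        atTop (𝓝 (Fin.cons (a + b * ξ) (g (a + b * ξ)))) :=
      (hFcont.tendsto _).comp harg
    exact tendsto_nhds_unique (hpt ξ) h2
  by_cases hb0 : b = 0
  · exact hφnc ⟨Fin.cons a (g a), fun ξ => by simpa [hb0] using hφ ξ⟩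
  -- b ≠ 0 : compute the derivative and contradict unboundedness
  have hF : ∀ z : ℂ, HasDerivAt (fun z : ℂ => (Fin.cons z (g z) : Fin (m + 1) → ℂ))
      (Fin.cons 1 (deriv g z)) z := by
    intro z
    rw [hasDerivAt_pi]
    intro i
    refine Fin.cases ?_ ?_ i
    · simpa using hasDerivAt_id' z
    · intro j
      simp only [Fin.cons_succ]
      exact hasDerivAt_pi.1 (hg z).hasDerivAt j
  have hderiv : ∀ ξ : ℂ, deriv φ ξ = b • (Fin.cons 1 (deriv g (a + b * ξ)) : Fin (m + 1) → ℂ) := by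
    intro ξ
    have hlin : HasDerivAt (fun ξ : ℂ => a + b * ξ) b ξ := by
      simpa using ((hasDerivAt_id ξ).const_mul b).const_add a
    have := (hF (a + b * ξ)).scomp ξ hlin
    have h3 : HasDerivAt φ (b • (Fin.cons 1 (deriv g (a + b * ξ)) : Fin (m + 1) → ℂ)) ξ := by
      refine this.congr_of_eventuallyEq ?_
      filter_upwards with x
      exact (hφ x).symm ▸ rfl
    exact h3.deriv
  apply hunbdd
  refine ⟨C / ‖b‖, fun z => ?_⟩
  have hξ := hC ((z - a) / b)
  have hz : a + b * ((z - a) / b) = z := by field_simp; ring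
  rw [hφ, hderiv, hz, hEhom] at hξ
  have hbpos : 0 < ‖b‖ := by
    simpa using (norm_pos_iff.mpr hb0)
  rw [le_div_iff₀ hbpos, mul_comm]
  exact hξ
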